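/- There exists a nonzero constant C such that for all i, j ∈ {1,2,3}, the integral over ℝ³ of xᵢ·V(x)·∂ⱼW(x) equals δᵢⱼ·C, where V = 5W⁴. -/

import Mathlib

open MeasureTheory

/-- The ground state soliton `W(x) = √3 (1 + 3|x|²)^(-1/2)` on `ℝ³`. -/
noncomputable def W (x : Fin 3 → ℝ) : ℝ :=
  Real.sqrt 3 * (1 + 3 * ∑ i, x i ^ 2) ^ (-(1 : ℝ) / 2)

/-- The `i`-th partial derivative of a function on `ℝ³`. -/
noncomputable def pderiv3 (i : Fin 3) (f : (Fin 3 → ℝ) → ℝ) (x : Fin 3 → ℝ) : ℝ :=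
  fderiv ℝ f x (Pi.single i 1)

/-- The Euclidean Laplacian on `ℝ³`, `Δf = ∑ᵢ ∂ᵢ∂ᵢ f`. -/
noncomputable def laplacian3 (f : (Fin 3 → ℝ) → ℝ) (x : Fin 3 → ℝ) : ℝ :=
  ∑ i, pderiv3 i (pderiv3 i f) x

/-- `ΛW = (1/2)W + x·∇W`, the scaling derivative of the soliton. -/
noncomputable def LamW (x : Fin 3 → ℝ) : ℝ :=
  (1 / 2) * W x + ∑ i, x i * pderiv3 i W x

noncomputable def uu (x : Fin 3 → ℝ) : ℝ := 1 + 3 * ∑ i, x i ^ 2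

lemma uu_pos (x : Fin 3 → ℝ) : 0 < uu x := by
  have h : 0 ≤ ∑ i, x i ^ 2 := Finset.sum_nonneg fun i _ => sq_nonneg _
  unfold uu; nlinarith

lemma hasFDerivAt_uu (x : Fin 3 → ℝ) :
    HasFDerivAt uu ((3:ℝ) • ∑ i : Fin 3, ((x i) •
      (ContinuousLinearMap.proj i : (Fin 3 → ℝ) →L[ℝ] ℝ) + (x i) •
      (ContinuousLinearMap.proj i : (Fin 3 → ℝ) →L[ℝ] ℝ))) x := by
  have h : ∀ i ∈ Finset.univ, HasFDerivAt (fun y : Fin 3 → ℝ => y i ^ 2)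
      ((x i) • (ContinuousLinearMap.proj i : (Fin 3 → ℝ) →L[ℝ] ℝ) + (x i) •
      (ContinuousLinearMap.proj i : (Fin 3 → ℝ) →L[ℝ] ℝ)) x := by
    intro i _
    have h1 : HasFDerivAt (fun y : Fin 3 → ℝ => y i)
        (ContinuousLinearMap.proj i : (Fin 3 → ℝ) →L[ℝ] ℝ) x :=
      (ContinuousLinearMap.proj i : (Fin 3 → ℝ) →L[ℝ] ℝ).hasFDerivAt
    simpa [pow_two] using h1.fun_mul h1
  exact ((HasFDerivAt.sum h).const_mul (3:ℝ)).const_add 1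

lemma hasFDerivAt_W (x : Fin 3 → ℝ) :
    HasFDerivAt W ((Real.sqrt 3) • ((-(1:ℝ)/2 * uu x ^ (-(1:ℝ)/2 - 1)) •
      ((3:ℝ) • ∑ i : Fin 3, ((x i) •
      (ContinuousLinearMap.proj i : (Fin 3 → ℝ) →L[ℝ] ℝ) + (x i) •
      (ContinuousLinearMap.proj i : (Fin 3 → ℝ) →L[ℝ] ℝ))))) x := by
  have hr : HasDerivAt (fun t : ℝ => t ^ (-(1:ℝ)/2)) (-(1:ℝ)/2 * uu x ^ (-(1:ℝ)/2 - 1)) (uu x) :=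
    Real.hasDerivAt_rpow_const (Or.inl (uu_pos x).ne')
  have h2 := (hr.comp_hasFDerivAt x (hasFDerivAt_uu x)).const_mul (Real.sqrt 3)
  exact h2

lemma pderivW (j : Fin 3) (x : Fin 3 → ℝ) :
    fderiv ℝ W x (Pi.single j 1) = -3 * Real.sqrt 3 * x j * (uu x) ^ (-(3:ℝ)/2) := by
  rw [(hasFDerivAt_W x).fderiv]
  have hx : ∀ i : Fin 3, (Pi.single j (1:ℝ) : Fin 3 → ℝ) i = if i = j then 1 else 0 := by
    intro i; exact Pi.single_apply j (1:ℝ) i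
  simp only [ContinuousLinearMap.smul_apply, ContinuousLinearMap.coe_sum',
    Finset.sum_apply, ContinuousLinearMap.add_apply, ContinuousLinearMap.proj_apply,
    smul_eq_mul]
  rw [show (-(1:ℝ)/2 - 1) = -(3:ℝ)/2 by norm_num]
  simp only [hx, mul_ite, mul_one, mul_zero]
  simp only [Finset.sum_add_distrib, Finset.sum_ite_eq' Finset.univ j (fun i => x i),
    Finset.mem_univ, if_true]
  ring

lemma integrand_eq (i j : Fin 3) (x : Fin 3 → ℝ) :
    x i * (5 * (W x) ^ 4) * fderiv ℝ W x (Pi.single j 1) =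
      (-135 * Real.sqrt 3) * (x i * x j * uu x ^ (-(7:ℝ)/2)) := by
  rw [pderivW]
  have h3 : Real.sqrt 3 ^ 4 = 9 := by
    rw [show (4:ℕ) = 2*2 from rfl, pow_mul, Real.sq_sqrt (by norm_num : (0:ℝ) ≤ 3)]
    norm_num
  have h1 : (W x) ^ 4 = 9 * uu x ^ (-(2:ℝ)) := by
    unfold W uu
    rw [mul_pow, h3, ← Real.rpow_natCast ((1 + 3 * ∑ i, x i ^ 2) ^ (-(1:ℝ)/2)) 4,
        ← Real.rpow_mul (by positivity)]
    norm_num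
  have h2 : uu x ^ (-(7:ℝ)/2) = uu x ^ (-(2:ℝ)) * uu x ^ (-(3:ℝ)/2) := by
    rw [← Real.rpow_add (uu_pos x)]; norm_num
  rw [h1, h2]; ring

noncomputable def G (i j : Fin 3) (x : Fin 3 → ℝ) : ℝ := x i * x j * uu x ^ (-(7:ℝ)/2)

lemma contG (i j : Fin 3) : Continuous (G i j) := by
  have hu : Continuous uu := by unfold uu; continuity
  exact ((continuous_apply i).mul (continuous_apply j)).mul
    (hu.rpow_const fun x => Or.inl (uu_pos x).ne')

lemma normsq_le (x : Fin 3 → ℝ) : ‖x‖ ^ 2 ≤ ∑ k, x k ^ 2 := by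
  have h : ‖x‖ ≤ Real.sqrt (∑ k, x k ^ 2) := by
    rw [pi_norm_le_iff_of_nonneg (Real.sqrt_nonneg _)]
    intro k
    have h1 : x k ^ 2 ≤ ∑ k, x k ^ 2 :=
      Finset.single_le_sum (f := fun k => x k ^ 2) (fun k _ => sq_nonneg _) (Finset.mem_univ k)
    have := Real.sqrt_le_sqrt h1
    rwa [Real.sqrt_sq_eq_abs] at this
  calc ‖x‖ ^ 2 ≤ Real.sqrt (∑ k, x k ^ 2) ^ 2 := by
        exact pow_le_pow_left₀ (norm_nonneg _) h 2
    _ = ∑ k, x k ^ 2 := Real.sq_sqrt (Finset.sum_nonneg fun k _ => sq_nonneg _)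

lemma intG (i j : Fin 3) : Integrable (G i j) := by
  have hd : (Module.finrank ℝ (Fin 3 → ℝ) : ℝ) < 5 := by
    simp [Module.finrank_pi]; norm_num
  have hint := (integrable_one_add_norm (E := Fin 3 → ℝ) (μ := volume) hd).const_mul
    ((2:ℝ) ^ ((7:ℝ)/2))
  refine hint.mono' (contG i j).aestronglyMeasurable ?_
  filter_upwards with x
  have ha : (0:ℝ) < 1 + ‖x‖ := by positivity
  have h1 : (1 + ‖x‖) ^ (2:ℕ) / 2 ≤ uu x := by
    have := normsq_le x
    unfold uu
    nlinarith [norm_nonneg x]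
  have h2 : uu x ^ (-(7:ℝ)/2) ≤ ((1 + ‖x‖) ^ (2:ℕ) / 2) ^ (-(7:ℝ)/2) :=
    Real.rpow_le_rpow_of_nonpos (by positivity) h1 (by norm_num)
  have h3 : ((1 + ‖x‖) ^ (2:ℕ) / 2) ^ (-(7:ℝ)/2)
      = (2:ℝ) ^ ((7:ℝ)/2) * (1 + ‖x‖) ^ (-(7:ℝ)) := by
    rw [Real.div_rpow (by positivity) (by norm_num),
      ← Real.rpow_natCast (1 + ‖x‖) 2, ← Real.rpow_mul ha.le,
      show ((2:ℕ):ℝ) * (-(7:ℝ)/2) = -(7:ℝ) by norm_num,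
      show (-(7:ℝ)/2) = -((7:ℝ)/2) by norm_num,
      Real.rpow_neg (by norm_num : (0:ℝ) ≤ 2)]
    field_simp
  have hP0 : (0:ℝ) ≤ uu x ^ (-(7:ℝ)/2) := Real.rpow_nonneg (uu_pos x).le _
  have ei : |x i| ≤ 1 + ‖x‖ := le_trans (norm_le_pi_norm x i) (by linarith [norm_nonneg x])
  have ej : |x j| ≤ 1 + ‖x‖ := le_trans (norm_le_pi_norm x j) (by linarith [norm_nonneg x])
  have key : |x i| * |x j| * (uu x ^ (-(7:ℝ)/2)) ≤
      (1 + ‖x‖) * (1 + ‖x‖) * ((2:ℝ) ^ ((7:ℝ)/2) * (1 + ‖x‖) ^ (-(7:ℝ))) := by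
    apply mul_le_mul (mul_le_mul ei ej (abs_nonneg _) ha.le) (h3 ▸ h2) hP0 (by positivity)
  have hAA : (1 + ‖x‖) * (1 + ‖x‖) * ((2:ℝ) ^ ((7:ℝ)/2) * (1 + ‖x‖) ^ (-(7:ℝ)))
      = (2:ℝ) ^ ((7:ℝ)/2) * (1 + ‖x‖) ^ (-(5:ℝ)) := by
    have e2 : (1 + ‖x‖) ^ ((2:ℝ)) = (1 + ‖x‖) * (1 + ‖x‖) := by
      rw [show (2:ℝ) = ((2:ℕ):ℝ) by norm_num, Real.rpow_natCast]; ring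
    have h5 : (1 + ‖x‖) ^ ((2:ℝ)) * (1 + ‖x‖) ^ (-(7:ℝ)) = (1 + ‖x‖) ^ (-(5:ℝ)) := by
      rw [← Real.rpow_add ha]; norm_num
    rw [← e2, ← h5]; ring
  rw [hAA] at key
  calc ‖G i j x‖ = |x i| * |x j| * (uu x ^ (-(7:ℝ)/2)) := by
        rw [Real.norm_eq_abs]
        unfold G
        rw [abs_mul, abs_mul, abs_of_nonneg hP0]
    _ ≤ (2:ℝ) ^ ((7:ℝ)/2) * (1 + ‖x‖) ^ (-(5:ℝ)) := key
    _ = (2:ℝ) ^ ((7:ℝ)/2) * (1 + ‖x‖) ^ ((-5):ℝ) := by norm_num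

lemma measTj (j : Fin 3) :
    Measurable (fun (x : Fin 3 → ℝ) (k : Fin 3) => if k = j then -x k else x k) := by
  apply measurable_pi_iff.mpr
  intro k
  by_cases h : k = j
  · simp only [if_pos h]
    exact (measurable_pi_apply k).neg
  · simp only [if_neg h]
    exact measurable_pi_apply k

def Tj (j : Fin 3) : (Fin 3 → ℝ) ≃ᵐ (Fin 3 → ℝ) where
  toFun x k := if k = j then -x k else x k
  invFun x k := if k = j then -x k else x k
  left_inv x := by funext k; by_cases h : k = j <;> simp [h]
  right_inv x := by funext k; by_cases h : k = j <;> simp [h]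
  measurable_toFun := measTj j
  measurable_invFun := measTj j

lemma Tj_mp (j : Fin 3) : MeasurePreserving (Tj j) volume volume := by
  have : MeasurePreserving (fun (x : Fin 3 → ℝ) (k : Fin 3) =>
      (fun t : ℝ => if k = j then -t else t) (x k)) volume volume := by
    apply volume_preserving_pi (f := fun (k : Fin 3) (t : ℝ) => if k = j then -t else t)
    intro k
    by_cases h : k = j
    · simp only [if_pos h]
      exact Measure.measurePreserving_neg _
    · simp only [if_neg h]
      exact MeasurePreserving.id _
  exact this

lemma intG_offdiag (i j : Fin 3) (h : i ≠ j) : ∫ x, G i j x = 0 := by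
  have h1 : ∫ x, G i j (Tj j x) = ∫ x, G i j x := (Tj_mp j).integral_comp' _
  have h2 : ∀ x, G i j (Tj j x) = - G i j x := by
    intro x
    have hk : ∀ k, (Tj j x k) ^ 2 = x k ^ 2 := by
      intro k; by_cases hkj : k = j <;> simp [Tj, MeasurableEquiv.coe_mk, Equiv.coe_fn_mk, hkj]
    have hi : Tj j x i = x i := by simp [Tj, MeasurableEquiv.coe_mk, Equiv.coe_fn_mk, h]
    have hj : Tj j x j = - x j := by simp [Tj, MeasurableEquiv.coe_mk, Equiv.coe_fn_mk]
    unfold G uu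
    simp_rw [hk]
    rw [hi, hj]; ring
  simp_rw [h2, integral_neg] at h1
  linarith

lemma intG_diag (i : Fin 3) : ∫ x, G i i x = ∫ x, G 0 0 x := by
  set e : Fin 3 ≃ Fin 3 := Equiv.swap 0 i with he
  have hmp := volume_measurePreserving_piCongrLeft (fun _ : Fin 3 => ℝ) e
  have h1 := hmp.integral_comp' (G i i)
  have happ : ∀ (f : Fin 3 → ℝ) (a : Fin 3),
      (MeasurableEquiv.piCongrLeft (fun _ : Fin 3 => ℝ) e) f (e a) = f a := by
    intro f a
    simp [MeasurableEquiv.coe_piCongrLeft, Equiv.piCongrLeft_apply_apply]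
  rw [← h1]
  congr 1
  funext f
  have hsum : ∑ k, ((MeasurableEquiv.piCongrLeft (fun _ : Fin 3 => ℝ) e) f k) ^ 2
      = ∑ k, f k ^ 2 := by
    rw [← Equiv.sum_comp e
      (fun k => ((MeasurableEquiv.piCongrLeft (fun _ : Fin 3 => ℝ) e) f k) ^ 2)]
    exact Finset.sum_congr rfl fun k _ => by rw [happ]
  have h0 : (MeasurableEquiv.piCongrLeft (fun _ : Fin 3 => ℝ) e) f i = f 0 := by
    have : e 0 = i := Equiv.swap_apply_left 0 i
    rw [← this, happ]
  unfold G uu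
  rw [hsum, h0]

lemma intG00_pos : 0 < ∫ x, G 0 0 x := by
  rw [integral_pos_iff_support_of_nonneg]
  · refine lt_of_lt_of_le ?_ (measure_mono (show (Set.univ.pi fun _ : Fin 3 => Set.Ioo (1:ℝ) 2)
      ⊆ Function.support (G 0 0) from ?_))
    · rw [volume_pi_pi]
      simp [Real.volume_Ioo]
      norm_num
    · intro x hx
      have h0 : (1:ℝ) < x 0 := (hx 0 (Set.mem_univ _)).1
      have hu := uu_pos x
      have hx0 : (0:ℝ) < x 0 := lt_trans one_pos h0
      have : (0:ℝ) < G 0 0 x := by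
        unfold G
        exact mul_pos (mul_pos hx0 hx0) (Real.rpow_pos_of_pos hu _)
      exact ne_of_gt this
  · intro x
    unfold G
    exact mul_nonneg (mul_self_nonneg _) (Real.rpow_nonneg (uu_pos x).le _)
  · exact intG 0 0

/-- `∫ xᵢ V ∂ⱼW = δᵢⱼ C` for some nonzero constant `C`, with `V = 5W⁴`. -/
theorem integral_x_V_pderivW :
    ∃ C : ℝ, C ≠ 0 ∧ ∀ i j : Fin 3,
      ∫ x : Fin 3 → ℝ, x i * (5 * (W x) ^ 4) * pderiv3 j W x =
        if i = j then C else 0 := by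
  refine ⟨(-135 * Real.sqrt 3) * ∫ x, G 0 0 x, ?_, ?_⟩
  · have h1 : (0:ℝ) < Real.sqrt 3 := Real.sqrt_pos.mpr (by norm_num)
    have h2 := intG00_pos
    have h3 : (-135 * Real.sqrt 3) * ∫ x, G 0 0 x < 0 :=
      mul_neg_of_neg_of_pos (by nlinarith) h2
    exact ne_of_lt h3
  · intro i j
    have he : (fun x : Fin 3 → ℝ => x i * (5 * (W x) ^ 4) * pderiv3 j W x)
        = fun x => (-135 * Real.sqrt 3) * G i j x := by
      funext x
      unfold pderiv3
      exact integrand_eq i j x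
    rw [he, MeasureTheory.integral_const_mul]
    by_cases hij : i = j
    · subst hij
      rw [if_pos rfl, intG_diag]
    · rw [if_neg hij, intG_offdiag i j hij, mul_zero]
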